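/- For every prime p and every integer e ≥ 1, there exists a polynomial L with integer coefficients of degree at most ep−1 such that for all integers z₀, z₁ with 0 ≤ z₀ < p, one has L(z₀ + p·z₁) ≡ z₀ (mod p^e). -/

import Mathlib

open Polynomial Finset

/-- `k!` divides a product of `k` consecutive integers. -/
lemma LDE.factorial_dvd_prod (t : ℤ) (k : ℕ) :
    (k.factorial : ℤ) ∣ ∏ i ∈ range k, (t - i) := by
  have h1 : (descPochhammer ℤ k).eval t = ∏ i ∈ range k, (t - i) := by
    induction k with
    | zero => simp
    | succ n ih => rw [descPochhammer_succ_eval, ih, prod_range_succ]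
  have h2 := Ring.descPochhammer_eq_factorial_smul_choose t k
  rw [← Polynomial.eval_eq_smeval] at h2
  rw [← h1, h2, nsmul_eq_mul]
  exact Dvd.intro _ rfl

lemma LDE.pow_dvd_factorial_mul (p : ℕ) (hp : 0 < p) (e : ℕ) :
    p ^ e ∣ (e * p).factorial := by
  induction e with
  | zero => simp
  | succ n ih =>
    have hpos : 0 < (n + 1) * p := by positivity
    have hmul : (n + 1) * p = n * p + p := by ring
    have h2 : n * p ≤ (n + 1) * p - 1 := by omega
    calc p ^ (n + 1) = p ^ n * p := pow_succ p n
      _ ∣ ((n + 1) * p - 1).factorial * ((n + 1) * p) :=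
          mul_dvd_mul (ih.trans (Nat.factorial_dvd_factorial h2)) (dvd_mul_left p (n + 1))
      _ = ((n + 1) * p).factorial := by
          rw [mul_comm]; exact Nat.mul_factorial_pred hpos.ne'

lemma LDE.eval_modeq (P : Polynomial ℤ) {n a b : ℤ} (h : a ≡ b [ZMOD n]) :
    P.eval a ≡ P.eval b [ZMOD n] := by
  rw [Int.modEq_iff_dvd] at h ⊢
  exact h.trans (Polynomial.sub_dvd_eval_sub b a P)

/-- Congruence mod `p^(j+1)` gives `p`-th powers congruent mod `p^(j+2)`. -/
lemma LDE.pow_step (p : ℕ) (hp : p.Prime) (j : ℕ) {a b : ℤ}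
    (h : a ≡ b [ZMOD (p : ℤ) ^ (j + 1)]) :
    a ^ p ≡ b ^ p [ZMOD (p : ℤ) ^ (j + 2)] := by
  have hd : ((p : ℤ)) ^ (j + 1) ∣ b - a := Int.modEq_iff_dvd.mp h
  have hp1 : ((p : ℤ)) ∣ b - a :=
    (dvd_pow_self (p : ℤ) (Nat.succ_ne_zero j)).trans hd
  have hab : (a : ZMod p) = (b : ZMod p) := by
    rw [ZMod.intCast_eq_intCast_iff_dvd_sub]
    exact hp1
  have hS' : (p : ℤ) ∣ ∑ i ∈ range p, b ^ i * a ^ (p - 1 - i) := by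
    rw [← ZMod.intCast_zmod_eq_zero_iff_dvd]
    push_cast
    calc (∑ i ∈ range p, (b : ZMod p) ^ i * (a : ZMod p) ^ (p - 1 - i))
        = ∑ _i ∈ range p, (b : ZMod p) ^ (p - 1) := by
          refine Finset.sum_congr rfl fun i hi => ?_
          rw [← hab, hab, ← pow_add]
          congr 1
          have := Finset.mem_range.mp hi
          omega
      _ = (p : ZMod p) * (b : ZMod p) ^ (p - 1) := by
          rw [Finset.sum_const, card_range, nsmul_eq_mul]
      _ = 0 := by rw [ZMod.natCast_self, zero_mul]
  have key : ((p : ℤ)) ^ (j + 2) ∣ b ^ p - a ^ p := by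
    rw [← geom_sum₂_mul (b : ℤ) (a : ℤ) p]
    calc ((p : ℤ)) ^ (j + 2) = (p : ℤ) * (p : ℤ) ^ (j + 1) := by ring
      _ ∣ (∑ i ∈ range p, b ^ i * a ^ (p - 1 - i)) * (b - a) :=
          mul_dvd_mul hS' hd
  exact Int.modEq_iff_dvd.mpr key

/-- Euler's theorem packaged for small nonzero integers mod `p^m`. -/
lemma LDE.euler_zmod (p : ℕ) (hp : p.Prime) (m : ℕ) {d : ℤ} (hd0 : d ≠ 0)
    (hdp : |d| < p) : (d : ZMod (p ^ m)) ^ (p ^ m).totient = 1 := by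
  haveI : NeZero (p ^ m) := ⟨pow_ne_zero m hp.pos.ne'⟩
  have h1 : ¬(p : ℤ) ∣ d := fun hdvd => hd0 (Int.eq_zero_of_abs_lt_dvd hdvd hdp)
  have h2 : ¬ p ∣ d.natAbs := fun h =>
    h1 (Int.dvd_natAbs.mp (Int.natCast_dvd_natCast.mpr h))
  have hcop : d.natAbs.Coprime (p ^ m) :=
    Nat.Coprime.pow_right m ((Nat.Prime.coprime_iff_not_dvd hp).mpr h2).symm
  have hu : IsUnit ((d.natAbs : ZMod (p ^ m))) := (ZMod.isUnit_iff_coprime _ _).mpr hcop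
  have hud : IsUnit ((d : ZMod (p ^ m))) := by
    rcases Int.natAbs_eq d with h | h
    · rw [h, Int.cast_natCast]; exact hu
    · rw [h, Int.cast_neg, Int.cast_natCast]; exact hu.neg
  obtain ⟨u, hu'⟩ := hud
  calc (d : ZMod (p ^ m)) ^ (p ^ m).totient
      = ((u ^ (p ^ m).totient : (ZMod (p ^ m))ˣ) : ZMod (p ^ m)) := by
        rw [← hu', Units.val_pow_eq_pow_val]
    _ = 1 := by rw [ZMod.pow_totient u, Units.val_one]

/-- Fermat: `p ∣ a - a^p` over `ℤ`. -/
lemma LDE.fermat_dvd (p : ℕ) (hp : p.Prime) (a : ℤ) : (p : ℤ) ∣ a - a ^ p := by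
  haveI := Fact.mk hp
  rw [← ZMod.intCast_zmod_eq_zero_iff_dvd]
  push_cast
  rw [ZMod.pow_card (a : ZMod p), sub_self]

/-- Iterated composition of the lifting polynomial. -/
noncomputable def LDE.iter (F : Polynomial ℤ) : ℕ → Polynomial ℤ
  | 0 => Polynomial.X
  | k + 1 => F.comp (LDE.iter F k)

/-- Existence of a (possibly high-degree) lowest-digit-extraction polynomial. -/
lemma LDE.exists_highdeg (p : ℕ) (hp : p.Prime) (e : ℕ) (he : 1 ≤ e) :
    ∃ G : Polynomial ℤ, ∀ z₀ z₁ : ℤ, 0 ≤ z₀ → z₀ < (p : ℤ) →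
      G.eval (z₀ + (p : ℤ) * z₁) ≡ z₀ [ZMOD (p : ℤ) ^ e] := by
  haveI : NeZero (p ^ (e - 1)) := ⟨pow_ne_zero _ hp.pos.ne'⟩
  set m : ℕ := e - 1 with hm
  set lam : ℕ := (p ^ m).totient with hlam
  have hlam0 : lam ≠ 0 := (Nat.totient_pos.mpr (pow_pos hp.pos m)).ne'
  -- the correction values
  set c : ℕ → ℤ := fun i => ((i : ℤ) - (i : ℤ) ^ p) / p with hcdef
  have hc : ∀ i : ℕ, (p : ℤ) * c i = (i : ℤ) - (i : ℤ) ^ p := fun i =>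
    Int.mul_ediv_cancel' (LDE.fermat_dvd p hp (i : ℤ))
  -- the correction polynomial
  set g : Polynomial ℤ := ∑ i ∈ range p, C (c i) * (1 - (X - C (i : ℤ)) ^ lam) with hgdef
  have hgeval : ∀ t : ℤ, g.eval t = ∑ i ∈ range p, c i * (1 - (t - (i : ℤ)) ^ lam) := by
    intro t; rw [hgdef]; simp [eval_finset_sum]
  -- g interpolates c mod p^m on {0, ..., p-1}
  have hginterp : ∀ n0 : ℕ, n0 < p → g.eval (n0 : ℤ) ≡ c n0 [ZMOD (p : ℤ) ^ m] := by
    intro n0 hn0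
    have : ((g.eval (n0 : ℤ) : ℤ) : ZMod (p ^ m)) = ((c n0 : ℤ) : ZMod (p ^ m)) := by
      rw [hgeval]
      push_cast
      rw [Finset.sum_eq_single_of_mem n0 (Finset.mem_range.mpr hn0)]
      · rw [sub_self, zero_pow hlam0, sub_zero, mul_one]
      · intro i hi hne
        have hd0 : ((n0 : ℤ) - (i : ℤ)) ≠ 0 := by
          intro h; apply hne; exact_mod_cast (sub_eq_zero.mp h).symm
        have hdp : |(n0 : ℤ) - (i : ℤ)| < p := by
          have := Finset.mem_range.mp hi
          rw [abs_sub_lt_iff]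
          constructor <;> push_cast <;> omega
        have := LDE.euler_zmod p hp m hd0 hdp
        push_cast at this
        rw [this, sub_self, mul_zero]
    have := (ZMod.intCast_eq_intCast_iff _ _ _).mp this
    have hcast : (((p : ℕ) ^ m : ℕ) : ℤ) = (p : ℤ) ^ m := by push_cast; ring
    rwa [hcast] at this
  -- the lifting polynomial
  set F : Polynomial ℤ := X ^ p + C (p : ℤ) * g with hFdef
  have hFeval : ∀ t : ℤ, F.eval t = t ^ p + (p : ℤ) * g.eval t := by
    intro t; rw [hFdef]; simp
  -- iterate F
  refine ⟨LDE.iter F (e - 1), ?_⟩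
  intro z₀ z₁ hz0 hz1
  set x : ℤ := z₀ + (p : ℤ) * z₁ with hx
  set n0 : ℕ := z₀.toNat with hn0def
  have hzn : (n0 : ℤ) = z₀ := Int.toNat_of_nonneg hz0
  have hn0p : n0 < p := by omega
  -- main induction
  have main : ∀ k : ℕ, k ≤ e - 1 →
      (LDE.iter F k).eval x ≡ z₀ [ZMOD (p : ℤ) ^ (k + 1)] := by
    intro k
    induction k with
    | zero =>
      intro _
      rw [LDE.iter, eval_X, pow_one, hx]
      exact Int.modEq_iff_dvd.mpr ⟨-z₁, by ring⟩
    | succ k ih =>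
      intro hk
      have ihk := ih (by omega)
      rw [LDE.iter, eval_comp]
      set y : ℤ := (LDE.iter F k).eval x with hy
      rw [hFeval]
      -- y^p ≡ z₀^p mod p^(k+2)
      have h1 : y ^ p ≡ z₀ ^ p [ZMOD (p : ℤ) ^ (k + 2)] := LDE.pow_step p hp k ihk
      -- p * g(y) ≡ p * g(z₀) mod p^(k+2)
      have h2 : (p : ℤ) * g.eval y ≡ (p : ℤ) * g.eval z₀ [ZMOD (p : ℤ) ^ (k + 2)] := by
        have := (LDE.eval_modeq g ihk).mul_left' (c := (p : ℤ))
        have hpow : (p : ℤ) * (p : ℤ) ^ (k + 1) = (p : ℤ) ^ (k + 2) := by ring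
        rwa [hpow] at this
      -- z₀^p + p * g(z₀) ≡ z₀ mod p^(k+2)
      have h3 : z₀ ^ p + (p : ℤ) * g.eval z₀ ≡ z₀ [ZMOD (p : ℤ) ^ (k + 2)] := by
        have hg := hginterp n0 hn0p
        have h4 : (p : ℤ) * g.eval (n0 : ℤ) ≡ (p : ℤ) * c n0 [ZMOD (p : ℤ) ^ e] := by
          have := hg.mul_left' (c := (p : ℤ))
          have hpow : (p : ℤ) * (p : ℤ) ^ m = (p : ℤ) ^ e := by
            rw [hm, ← pow_succ']
            congr 1
            omega
          rwa [hpow] at this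
        have h5 : z₀ ^ p + (p : ℤ) * c n0 = z₀ := by
          rw [hc n0, hzn]; ring
        have h6 : z₀ ^ p + (p : ℤ) * g.eval z₀ ≡ z₀ [ZMOD (p : ℤ) ^ e] := by
          calc z₀ ^ p + (p : ℤ) * g.eval z₀
              ≡ z₀ ^ p + (p : ℤ) * c n0 [ZMOD (p : ℤ) ^ e] := by
                rw [← hzn]; exact h4.add_left _
            _ = z₀ := h5
        exact h6.of_dvd (pow_dvd_pow (p : ℤ) (by omega))
      exact (h1.add h2).trans h3
  have := main (e - 1) le_rfl
  have he1 : e - 1 + 1 = e := by omega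
  rwa [he1] at this

theorem lowest_digit_extraction_new (p : ℕ) (hp : p.Prime) (e : ℕ) (he : 1 ≤ e) :
    ∃ L : Polynomial ℤ, L.natDegree ≤ e * p - 1 ∧
      ∀ z₀ z₁ : ℤ, 0 ≤ z₀ → z₀ < (p : ℤ) →
        L.eval (z₀ + (p : ℤ) * z₁) ≡ z₀ [ZMOD (p : ℤ) ^ e] := by
  obtain ⟨G, hG⟩ := LDE.exists_highdeg p hp e he
  set N : Polynomial ℤ := ∏ i ∈ range (e * p), (X - C (i : ℤ)) with hNdef
  have hNmonic : N.Monic := monic_prod_of_monic _ _ fun i _ => monic_X_sub_C _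
  have hNdeg : N.natDegree = e * p := by
    rw [hNdef, natDegree_prod_of_monic _ _ fun i _ => monic_X_sub_C _]
    simp only [natDegree_X_sub_C]
    simp
  have hNeval : ∀ t : ℤ, (p : ℤ) ^ e ∣ N.eval t := by
    intro t
    have h1 : ((e * p).factorial : ℤ) ∣ N.eval t := by
      rw [hNdef, eval_prod]
      simpa using LDE.factorial_dvd_prod t (e * p)
    have h2 : (p : ℤ) ^ e ∣ ((e * p).factorial : ℤ) := by
      have := LDE.pow_dvd_factorial_mul p hp.pos e
      exact_mod_cast Int.natCast_dvd_natCast.mpr this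
    exact h2.trans h1
  refine ⟨G %ₘ N, ?_, ?_⟩
  · -- degree bound
    have hep : 0 < e * p := Nat.mul_pos he hp.pos
    rcases eq_or_ne (G %ₘ N) 0 with h0 | h0
    · rw [h0]; simp
    · have hlt : (G %ₘ N).degree < N.degree := degree_modByMonic_lt G hNmonic
      have := natDegree_lt_natDegree h0 hlt
      omega
  · intro z₀ z₁ hz0 hz1
    set t : ℤ := z₀ + (p : ℤ) * z₁ with ht
    have hsplit : G.eval t = (G %ₘ N).eval t + N.eval t * (G /ₘ N).eval t := by
      conv_lhs => rw [← modByMonic_add_div G N]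
      simp [eval_add, eval_mul]
    have hmod : (G %ₘ N).eval t ≡ G.eval t [ZMOD (p : ℤ) ^ e] := by
      have heq : G.eval t - (G %ₘ N).eval t = N.eval t * (G /ₘ N).eval t := by
        rw [hsplit]; ring
      rw [Int.modEq_iff_dvd, heq]
      exact (hNeval t).mul_right _
    exact hmod.trans (hG z₀ z₁ hz0 hz1)
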